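/- arXiv:2405.06688 — 3 statements merged into one kernel-verified Lean document; each statement's English description precedes it below -/
import Mathlib

section
/- Define $S_{t,\nu,l}(d) = 2t^2 + \frac{\nu^2(e^{(2d-2)/l} + e^{-2d/l})}{1 - e^{-2/l}}$ for $t, \nu, l > 0$. If $(t, \nu, l)$ and $(t', \nu', l')$ are triples of positive reals with $S_{t,\nu,l}(d) = S_{t',\nu',l'}(d)$ for $d = 0, 1/4, 1/2$, then $t = t'$, $\nu = \nu'$, and $l = l'$. -/
/-- The second-moment function `S_{t,ν,l}(d)` of the coupled chain with
exponential interlayer hopping. -/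
noncomputable def Smom (t ν l d : ℝ) : ℝ :=
  2 * t ^ 2 + ν ^ 2 * (Real.exp ((2 * d - 2) / l) + Real.exp (-2 * d / l)) /
    (1 - Real.exp (-2 / l))

lemma expx (l : ℝ) (hl : l ≠ 0) (n : ℕ) :
    Real.exp (-(n / (2 * l))) = Real.exp (-(1 / (2 * l))) ^ n := by
  rw [← Real.exp_nat_mul]
  congr 1
  field_simp

/-- equality of `S` at `d = 0, 1/4, 1/2` determines `(t, ν, l)`
among positive triples. -/
theorem stmt6 (t ν l t' ν' l' : ℝ)
    (ht : 0 < t) (hν : 0 < ν) (hl : 0 < l)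
    (ht' : 0 < t') (hν' : 0 < ν') (hl' : 0 < l')
    (h0 : Smom t ν l 0 = Smom t' ν' l' 0)
    (h14 : Smom t ν l (1 / 4) = Smom t' ν' l' (1 / 4))
    (h12 : Smom t ν l (1 / 2) = Smom t' ν' l' (1 / 2)) :
    t = t' ∧ ν = ν' ∧ l = l' := by
  have hl0 : l ≠ 0 := ne_of_gt hl
  have hl0' : l' ≠ 0 := ne_of_gt hl'
  set x := Real.exp (-(1 / (2 * l))) with hxdef
  set y := Real.exp (-(1 / (2 * l'))) with hydef
  have hx0 : 0 < x := Real.exp_pos _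
  have hy0 : 0 < y := Real.exp_pos _
  have hx1 : x < 1 := by
    rw [hxdef]
    apply Real.exp_lt_one_iff.mpr
    rw [neg_lt, neg_zero]
    positivity
  have hy1 : y < 1 := by
    rw [hydef]
    apply Real.exp_lt_one_iff.mpr
    rw [neg_lt, neg_zero]
    positivity
  -- rewrite all exponentials as powers of x resp. y
  have E : ∀ (m : ℝ) (n : ℕ), m = -(n / (2 * l)) → Real.exp m = x ^ n := by
    intro m n hm; rw [hm, expx l hl0]
  have E' : ∀ (m : ℝ) (n : ℕ), m = -(n / (2 * l')) → Real.exp m = y ^ n := by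
    intro m n hm; rw [hm, expx l' hl0']
  unfold Smom at h0 h14 h12
  rw [E ((2 * (0:ℝ) - 2)/l) 4 (by push_cast; field_simp; try ring),
      E (-2 * (0:ℝ) / l) 0 (by push_cast; field_simp; try ring),
      E' ((2 * (0:ℝ) - 2)/l') 4 (by push_cast; field_simp; try ring),
      E' (-2 * (0:ℝ) / l') 0 (by push_cast; field_simp; try ring),
      E (-2 / l) 4 (by push_cast; field_simp; try ring),
      E' (-2 / l') 4 (by push_cast; field_simp; try ring)] at h0
  rw [E ((2 * (1/4:ℝ) - 2)/l) 3 (by push_cast; field_simp; try ring),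
      E (-2 * (1/4:ℝ) / l) 1 (by push_cast; field_simp; try ring),
      E' ((2 * (1/4:ℝ) - 2)/l') 3 (by push_cast; field_simp; try ring),
      E' (-2 * (1/4:ℝ) / l') 1 (by push_cast; field_simp; try ring),
      E (-2 / l) 4 (by push_cast; field_simp; try ring),
      E' (-2 / l') 4 (by push_cast; field_simp; try ring)] at h14
  rw [E ((2 * (1/2:ℝ) - 2)/l) 2 (by push_cast; field_simp; try ring),
      E (-2 * (1/2:ℝ) / l) 2 (by push_cast; field_simp; try ring),
      E' ((2 * (1/2:ℝ) - 2)/l') 2 (by push_cast; field_simp; try ring),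
      E' (-2 * (1/2:ℝ) / l') 2 (by push_cast; field_simp; try ring),
      E (-2 / l) 4 (by push_cast; field_simp; try ring),
      E' (-2 / l') 4 (by push_cast; field_simp; try ring)] at h12
  have hx4lt : x ^ 4 < 1 := pow_lt_one₀ hx0.le hx1 (by norm_num)
  have hy4lt : y ^ 4 < 1 := pow_lt_one₀ hy0.le hy1 (by norm_num)
  have h1x4 : (0:ℝ) < 1 - x ^ 4 := by linarith
  have h1y4 : (0:ℝ) < 1 - y ^ 4 := by linarith
  have hx4ne : (1 - x ^ 4) ≠ 0 := ne_of_gt h1x4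
  have hy4ne : (1 - y ^ 4) ≠ 0 := ne_of_gt h1y4
  set A := ν ^ 2 / (1 - x ^ 4) with hA
  set B := ν' ^ 2 / (1 - y ^ 4) with hB
  have hApos : 0 < A := div_pos (by positivity) h1x4
  have hBpos : 0 < B := div_pos (by positivity) h1y4
  have hAnu : ν ^ 2 = A * (1 - x ^ 4) := by
    rw [hA]; field_simp
  have hBnu : ν' ^ 2 = B * (1 - y ^ 4) := by
    rw [hB]; field_simp
  have e0 : A * (x ^ 4 + 1) = ν ^ 2 * (x ^ 4 + x ^ 0) / (1 - x ^ 4) := by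
    rw [hA]; field_simp; try ring
  have e0' : B * (y ^ 4 + 1) = ν' ^ 2 * (y ^ 4 + y ^ 0) / (1 - y ^ 4) := by
    rw [hB]; field_simp; try ring
  have e14 : A * (x ^ 3 + x) = ν ^ 2 * (x ^ 3 + x ^ 1) / (1 - x ^ 4) := by
    rw [hA]; field_simp; try ring
  have e14' : B * (y ^ 3 + y) = ν' ^ 2 * (y ^ 3 + y ^ 1) / (1 - y ^ 4) := by
    rw [hB]; field_simp; try ring
  have e12 : A * (2 * x ^ 2) = ν ^ 2 * (x ^ 2 + x ^ 2) / (1 - x ^ 4) := by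
    rw [hA]; field_simp; try ring
  have e12' : B * (2 * y ^ 2) = ν' ^ 2 * (y ^ 2 + y ^ 2) / (1 - y ^ 4) := by
    rw [hB]; field_simp; try ring
  clear_value A B
  have H0 : 2 * t ^ 2 + A * (x ^ 4 + 1) = 2 * t' ^ 2 + B * (y ^ 4 + 1) := by
    rw [e0, e0']; exact h0
  have H14 : 2 * t ^ 2 + A * (x ^ 3 + x) = 2 * t' ^ 2 + B * (y ^ 3 + y) := by
    rw [e14, e14']; exact h14
  have H12 : 2 * t ^ 2 + A * (2 * x ^ 2) = 2 * t' ^ 2 + B * (2 * y ^ 2) := by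
    rw [e12, e12']; exact h12
  clear_value x y
  clear h0 h14 h12 E E' e0 e0' e14 e14' e12 e12' hA hB
  have d1 : A * (x ^ 4 + 1 - x ^ 3 - x) = B * (y ^ 4 + 1 - y ^ 3 - y) := by
    linear_combination H0 - H14
  have d2 : A * (x ^ 3 + x - 2 * x ^ 2) = B * (y ^ 3 + y - 2 * y ^ 2) := by
    linear_combination H14 - H12
  have hh : A * ((x ^ 4 + 1 - x ^ 3 - x) * (y ^ 3 + y - 2 * y ^ 2)) =
      A * ((x ^ 3 + x - 2 * x ^ 2) * (y ^ 4 + 1 - y ^ 3 - y)) := by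
    linear_combination (y ^ 3 + y - 2 * y ^ 2) * d1 - (y ^ 4 + 1 - y ^ 3 - y) * d2
  have hPQ := mul_left_cancel₀ (ne_of_gt hApos) hh
  have hfac : (y - x) * ((1 - x * y) * ((1 - x) ^ 2 * (1 - y) ^ 2)) = 0 := by
    linear_combination hPQ
  have hxy : x = y := by
    rcases mul_eq_zero.mp hfac with h | h
    · linarith
    · exfalso
      have h1 : (0:ℝ) < 1 - x * y := by nlinarith
      have h2 : (0:ℝ) < (1 - x) ^ 2 * (1 - y) ^ 2 := by
        have : (0:ℝ) < 1 - x := by linarith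
        have : (0:ℝ) < 1 - y := by linarith
        positivity
      have := mul_pos h1 h2
      linarith
  have hll : l = l' := by
    have h2 : -(1 / (2 * l)) = -(1 / (2 * l')) := by
      apply Real.exp_injective
      rw [← hxdef, ← hydef]; exact hxy
    field_simp at h2
    linarith
  have hQ : (0:ℝ) < x ^ 3 + x - 2 * x ^ 2 := by
    have h := mul_pos hx0 (mul_pos (sub_pos.mpr hx1) (sub_pos.mpr hx1))
    have hid : x * ((1 - x) * (1 - x)) = x ^ 3 + x - 2 * x ^ 2 := by ring
    exact hid ▸ h
  have hAB : A = B := by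
    rw [← hxy] at d2
    exact mul_right_cancel₀ (ne_of_gt hQ) d2
  have hνν : ν = ν' := by
    have h2 : ν ^ 2 = ν' ^ 2 := by rw [hAnu, hBnu, hAB, hxy]
    have h3 : (ν - ν') * (ν + ν') = 0 := by linear_combination h2
    rcases mul_eq_zero.mp h3 with h | h <;> linarith
  have htt : t = t' := by
    rw [← hxy, hAB] at H12
    have h2 : t ^ 2 = t' ^ 2 := by linarith
    have h3 : (t - t') * (t + t') = 0 := by linear_combination h2
    rcases mul_eq_zero.mp h3 with h | h <;> linarith
  exact ⟨htt, hνν, hll⟩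
end

section
/- Let $P$ be a finite set, let $S : P \times [0,1] \to \mathbb{R}$ be such that for each $p \in P$, $d \mapsto S(p,d)$ is twice continuously differentiable with $|\partial_d^2 S(p,d)| \le c_1$ for all $d \in [0,1]$, and suppose $c_0 := \min_{p \ne p' \in P} \max_{d \in [0,1]} |\partial_d S(p,d) - \partial_d S(p',d)| > 0$. If $N > \max\{1, 3c_1/c_0\}$ is an integer and $d_i = i/N$ for $i = 0, \dots, N$, then the map $p \mapsto (S(p,d_0), \dots, S(p,d_N))$ is injective on $P$. -/
/-- if pairwise derivative separation `c₀ > 0` holds and the second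
derivatives are bounded by `c₁` on `[0,1]`, then sampling on a grid of spacing
`1/N` with `N > max {1, 3c₁/c₀}` determines the parameter `p` uniquely. -/
theorem stmt10 {P : Type*} [Finite P] (S : P → ℝ → ℝ) (c0 c1 : ℝ)
    (hS : ∀ p, ContDiffOn ℝ 2 (S p) (Set.Icc (0 : ℝ) 1))
    (hc1 : ∀ p, ∀ d ∈ Set.Icc (0 : ℝ) 1,
      |derivWithin (derivWithin (S p) (Set.Icc (0 : ℝ) 1)) (Set.Icc (0 : ℝ) 1) d| ≤ c1)
    (hc0pos : 0 < c0)
    (hc0 : ∀ p p', p ≠ p' → ∃ d ∈ Set.Icc (0 : ℝ) 1,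
      c0 ≤ |derivWithin (S p) (Set.Icc (0 : ℝ) 1) d -
            derivWithin (S p') (Set.Icc (0 : ℝ) 1) d|)
    (N : ℕ) (hN1 : 1 < N) (hN : 3 * c1 / c0 < (N : ℝ)) :
    Function.Injective (fun p : P => fun i : Fin (N + 1) => S p ((i : ℕ) / (N : ℝ))) := by
  set I : Set ℝ := Set.Icc (0:ℝ) 1 with hI
  have hUD : UniqueDiffOn ℝ I := uniqueDiffOn_Icc (by norm_num)
  have hNpos : (0:ℝ) < N := by positivity
  intro p p' h
  by_contra hne
  have hc1nn : 0 ≤ c1 := le_trans (abs_nonneg _) (hc1 p 0 (by simp [hI]))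
  obtain ⟨d, hdI, hsep⟩ := hc0 p p' hne
  set f : ℝ → ℝ := fun x => S p x - S p' x with hf
  have hfC : ContDiffOn ℝ 2 f I := (hS p).sub (hS p')
  have hfD : DifferentiableOn ℝ f I := hfC.differentiableOn (by norm_num)
  set g : ℝ → ℝ := derivWithin f I with hg
  have hgC : ContDiffOn ℝ 1 g I :=
    hfC.derivWithin hUD (by norm_num)
  have hgD : DifferentiableOn ℝ g I := hgC.differentiableOn one_ne_zero
  have hSd : ∀ q : P, DifferentiableOn ℝ (derivWithin (S q) I) I := fun q =>
    ((hS q).derivWithin hUD (le_refl 2) :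
      ContDiffOn ℝ 1 (derivWithin (S q) I) I).differentiableOn one_ne_zero
  have hgeq : ∀ x ∈ I, g x = derivWithin (S p) I x - derivWithin (S p') I x := by
    intro x hx
    exact derivWithin_sub (((hS p).differentiableOn (by norm_num)) x hx)
      (((hS p').differentiableOn (by norm_num)) x hx)
  have hzero : ∀ i : ℕ, i ≤ N → f ((i : ℝ) / N) = 0 := by
    intro i hi
    have h2 : S p ((i:ℝ)/N) = S p' ((i:ℝ)/N) := by
      simpa using congrFun h ⟨i, Nat.lt_succ_of_le hi⟩
    simp [hf, h2]
  have hd0 : 0 ≤ d := hdI.1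
  have hd1 : d ≤ 1 := hdI.2
  have : ∃ i : ℕ, i < N ∧ (i:ℝ)/N ≤ d ∧ d ≤ ((i:ℝ)+1)/N := by
    rcases eq_or_lt_of_le hd1 with h1 | h1
    · refine ⟨N - 1, Nat.sub_lt (by omega) one_pos, ?_, ?_⟩
      · rw [h1]
        apply div_le_one_of_le₀ _ hNpos.le
        exact_mod_cast Nat.sub_le N 1
      · have hcast : ((N - 1 : ℕ) : ℝ) + 1 = N := by
          have h1N : 1 ≤ N := by omega
          push_cast [Nat.cast_sub h1N]; ring
        rw [hcast, h1, div_self hNpos.ne']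
    · refine ⟨⌊d * N⌋₊, ?_, ?_, ?_⟩
      · have hlt : d * N < N := by nlinarith
        exact_mod_cast Nat.floor_lt (by positivity) |>.2 (by exact_mod_cast hlt)
      · rw [div_le_iff₀ hNpos]
        exact Nat.floor_le (by positivity)
      · rw [le_div_iff₀ hNpos]
        exact (Nat.lt_floor_add_one (d * N)).le
  obtain ⟨i, hiN, hid1, hid2⟩ := this
  set a : ℝ := (i:ℝ)/N with ha
  set b : ℝ := ((i:ℝ)+1)/N with hb
  have hab : a < b := by
    rw [ha, hb, div_lt_div_iff_of_pos_right hNpos]; linarith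
  have haI : Set.Icc a b ⊆ I := by
    apply Set.Icc_subset_Icc
    · positivity
    · rw [hb, div_le_one hNpos]; exact_mod_cast Nat.succ_le_of_lt hiN
  obtain ⟨ξ, hξ, hξ0⟩ := exists_hasDerivAt_eq_slope f (deriv f) hab
    (hfC.continuousOn.mono haI)
    (by
      intro x hx
      have hxI : I ∈ nhds x := by
        apply Icc_mem_nhds
        · exact lt_of_le_of_lt (by positivity : (0:ℝ) ≤ a) hx.1
        · exact lt_of_lt_of_le hx.2 (haI (Set.right_mem_Icc.2 hab.le)).2
      exact ((hfD.differentiableAt hxI)).hasDerivAt)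
  have hfa : f a = 0 := hzero i hiN.le
  have hfb : f b = 0 := by
    have := hzero (i+1) hiN
    simpa [hb] using this
  rw [hfa, hfb] at hξ0
  simp at hξ0
  have hξI : ξ ∈ I := haI (Set.Ioo_subset_Icc_self hξ)
  have hξnh : I ∈ nhds ξ := by
    apply Icc_mem_nhds
    · exact lt_of_le_of_lt (by positivity : (0:ℝ) ≤ a) hξ.1
    · exact lt_of_lt_of_le hξ.2 (haI (Set.right_mem_Icc.2 hab.le)).2
  have hgξ : g ξ = 0 := by
    rw [hg, derivWithin_of_mem_nhds hξnh, hξ0]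
  have hbound : ∀ x ∈ I, ‖derivWithin g I x‖ ≤ 2 * c1 := by
    intro x hx
    have hcong : derivWithin g I x =
        derivWithin (fun y => derivWithin (S p) I y - derivWithin (S p') I y) I x :=
      derivWithin_congr hgeq (hgeq x hx)
    rw [hcong, derivWithin_fun_sub (hSd p x hx) (hSd p' x hx)]
    calc ‖derivWithin (derivWithin (S p) I) I x - derivWithin (derivWithin (S p') I) I x‖
        ≤ |derivWithin (derivWithin (S p) I) I x| + |derivWithin (derivWithin (S p') I) I x| :=
          norm_sub_le _ _
      _ ≤ c1 + c1 := add_le_add (hc1 p x hx) (hc1 p' x hx)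
      _ = 2 * c1 := by ring
  have key : ‖g d - g ξ‖ ≤ 2 * c1 * ‖d - ξ‖ :=
    (convex_Icc 0 1).norm_image_sub_le_of_norm_derivWithin_le hgD hbound hξI hdI
  have hba : b - a = 1 / N := by rw [hb, ha]; ring
  have hdist : ‖d - ξ‖ ≤ 1 / N := by
    rw [Real.norm_eq_abs, abs_sub_le_iff]
    constructor
    · linarith [hξ.1, hξ.2]
    · linarith [hξ.1, hξ.2]
  have hgd : c0 ≤ |g d| := by rw [hgeq d hdI]; exact hsep
  have hfin : c0 ≤ 2 * c1 / N := by
    calc c0 ≤ |g d| := hgd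
      _ = ‖g d - g ξ‖ := by rw [hgξ, sub_zero]; rfl
      _ ≤ 2 * c1 * ‖d - ξ‖ := key
      _ ≤ 2 * c1 * (1 / N) := mul_le_mul_of_nonneg_left hdist (by positivity)
      _ = 2 * c1 / N := by ring
  have h3 : 3 * c1 < N * c0 := by
    have := (div_lt_iff₀ hc0pos).1 hN
    linarith
  rw [le_div_iff₀ hNpos] at hfin
  nlinarith
end

section
/- Let $v : \mathbb{R} \to \mathbb{C}$ be $T$-periodic and extend to an analytic function on the strip $\{|\mathrm{Im}(k)| < a\}$ with $|v(k)| \le C$ there, for some $a > 0$. Then for any integer $M \ge 1$, $\left| \frac{T}{M} \sum_{i=1}^{M} v(Ti/M) - \int_0^T v(k)\,dk \right| \le \frac{2TC}{e^{2\pi a M/T} - 1}$. -/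
open Complex Set intervalIntegral Finset

/-- Trefethen: exponential accuracy of the periodic trapezoidal
rule for a `T`-periodic function analytic and bounded by `C` on the strip
`|Im k| < a`. -/
theorem stmt16 (T a C : ℝ) (hT : 0 < T) (ha : 0 < a)
    (v : ℂ → ℂ)
    (hv : DifferentiableOn ℂ v {z : ℂ | |z.im| < a})
    (hper : ∀ z : ℂ, |z.im| < a → v (z + (T : ℂ)) = v z)
    (hC : ∀ z : ℂ, |z.im| < a → ‖v z‖ ≤ C)
    (M : ℕ) (hM : 1 ≤ M) :
    ‖((T / M : ℝ) : ℂ) * (∑ i ∈ Finset.range M, v ((T * ((i : ℝ) + 1) / M : ℝ))) -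
        ∫ k in (0 : ℝ)..T, v (k : ℂ)‖ ≤
      2 * T * C / (Real.exp (2 * Real.pi * a * M / T) - 1) := by
  haveI : Fact (0 < T) := ⟨hT⟩
  have hπ := Real.pi_pos
  have hTc : (T : ℂ) ≠ 0 := by exact_mod_cast hT.ne'
  have hM0 : (M : ℝ) ≠ 0 := by positivity
  have hMc : (M : ℂ) ≠ 0 := by exact_mod_cast (by positivity : (M:ℝ) ≠ 0)
  have hopen : IsOpen {z : ℂ | |z.im| < a} :=
    isOpen_lt (continuous_abs.comp Complex.continuous_im) continuous_const
  have hmemR : ∀ x : ℝ, ((x : ℂ) ∈ {z : ℂ | |z.im| < a}) := fun x => by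
    simpa using ha
  have hC0 : 0 ≤ C := le_trans (norm_nonneg _) (hC 0 (by simpa using ha))
  have hvc : Continuous fun x : ℝ => v (x : ℂ) := by
    rw [continuous_iff_continuousAt]
    exact fun x => (hv.continuousOn.continuousAt (hopen.mem_nhds (hmemR x))).comp
      Complex.continuous_ofReal.continuousAt
  have hperR : Function.Periodic (fun x : ℝ => v (x : ℂ)) T := fun x => by
    have := hper (x : ℂ) (hmemR x)
    push_cast
    simpa using this
  set F : C(AddCircle T, ℂ) := ⟨hperR.lift, hvc.quotient_liftOn' _⟩ with hFdef
  have hFcoe : ∀ x : ℝ, F ((x : ℝ) : AddCircle T) = v (x : ℂ) := fun x => hperR.lift_coe x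
  set c : ℤ → ℂ := fourierCoeff (⇑F) with hcdef
  set g : ℤ → ℂ → ℂ := fun n z => Complex.exp (2 * (Real.pi:ℂ) * Complex.I * ((-n : ℤ) : ℂ) * z / (T:ℂ)) * v z with hgdef
  have hgdiff : ∀ n : ℤ, DifferentiableOn ℂ (g n) {z : ℂ | |z.im| < a} := by
    intro n
    apply DifferentiableOn.mul _ hv
    apply Differentiable.differentiableOn
    fun_prop
  -- Step A : contour shift
  have hshift : ∀ n : ℤ, ∀ b : ℝ, |b| < a →
      (∫ x in (0:ℝ)..T, g n x) = ∫ x in (0:ℝ)..T, g n (x + b * Complex.I) := by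
    intro n b hb
    have habs : ∀ y : ℝ, y ∈ Set.uIcc (0:ℝ) b → |y| ≤ |b| := by
      intro y hy
      rw [Set.uIcc, Set.mem_Icc] at hy
      rw [abs_le]
      refine ⟨le_trans (le_inf (neg_nonpos_of_nonneg (abs_nonneg b)) (neg_abs_le b)) hy.1,
        le_trans hy.2 (sup_le (abs_nonneg b) (le_abs_self b))⟩
    have hrect : DifferentiableOn ℂ (g n)
        (Set.uIcc (0:ℂ).re ((T:ℂ) + (b:ℂ) * Complex.I).re ×ℂ
          Set.uIcc (0:ℂ).im ((T:ℂ) + (b:ℂ) * Complex.I).im) := by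
      apply (hgdiff n).mono
      intro z hz
      have hzim := (Complex.mem_reProdIm.mp hz).2
      simp only [Complex.zero_im, Complex.add_im, Complex.ofReal_im, Complex.mul_I_im,
        Complex.ofReal_re, zero_add] at hzim
      exact lt_of_le_of_lt (habs _ hzim) hb
    have key := Complex.integral_boundary_rect_eq_zero_of_differentiableOn (g n) 0
      ((T:ℂ) + (b:ℂ) * Complex.I) hrect
    simp only [Complex.zero_re, Complex.zero_im, Complex.add_re, Complex.add_im,
      Complex.ofReal_re, Complex.ofReal_im, Complex.mul_I_re, Complex.mul_I_im,
      neg_zero, add_zero, zero_add, Complex.ofReal_zero, zero_mul] at key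
    have hside : (∫ y in (0:ℝ)..b, g n ((T:ℝ) + (y:ℂ) * Complex.I)) =
        ∫ y in (0:ℝ)..b, g n ((y:ℂ) * Complex.I) := by
      apply intervalIntegral.integral_congr
      intro y hy
      have hya : |y| < a := lt_of_le_of_lt (habs y hy) hb
      have hvper : v (((T:ℝ):ℂ) + (y:ℂ) * Complex.I) = v ((y:ℂ) * Complex.I) := by
        have := hper ((y:ℂ) * Complex.I) (by simpa using hya)
        rw [add_comm] at this
        simpa using this
      have hexp : Complex.exp (2 * (Real.pi:ℂ) * Complex.I * ((-n : ℤ) : ℂ) *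
            (((T:ℝ):ℂ) + (y:ℂ) * Complex.I) / (T:ℂ))
          = Complex.exp (2 * (Real.pi:ℂ) * Complex.I * ((-n : ℤ) : ℂ) *
            ((y:ℂ) * Complex.I) / (T:ℂ)) := by
        rw [show (2 * (Real.pi:ℂ) * Complex.I * ((-n : ℤ) : ℂ) *
            (((T:ℝ):ℂ) + (y:ℂ) * Complex.I) / (T:ℂ))
            = ((-n : ℤ) : ℂ) * (2 * (Real.pi:ℂ) * Complex.I)
              + 2 * (Real.pi:ℂ) * Complex.I * ((-n : ℤ) : ℂ) * ((y:ℂ) * Complex.I) / (T:ℂ) from by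
          field_simp]
        rw [Complex.exp_add, Complex.exp_int_mul_two_pi_mul_I, one_mul]
      show g n (((T:ℝ):ℂ) + (y:ℂ) * Complex.I) = g n ((y:ℂ) * Complex.I)
      simp only [hgdef]
      rw [hexp, hvper]
    rw [hside] at key
    linear_combination key
  -- Fourier coefficient as interval integral of g
  have hcoefint : ∀ n : ℤ, c n = (1/T : ℝ) • ∫ x in (0:ℝ)..T, g n x := by
    intro n
    rw [hcdef, fourierCoeff_eq_intervalIntegral (⇑F) n 0, zero_add]
    congr 1
    apply intervalIntegral.integral_congr
    intro x _
    show fourier (-n) ((x:ℝ) : AddCircle T) • F ((x:ℝ) : AddCircle T) = g n (x:ℂ)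
    rw [fourier_coe_apply, hFcoe, smul_eq_mul]
  -- Step B : bound on the (shifted) integral
  have hbound : ∀ n : ℤ, ∀ b : ℝ, |b| < a →
      ‖∫ x in (0:ℝ)..T, g n x‖ ≤ C * Real.exp (2 * Real.pi * n * b / T) * T := by
    intro n b hb
    rw [hshift n b hb]
    have hb1 : ∀ x ∈ Set.uIoc (0:ℝ) T,
        ‖g n ((x:ℂ) + (b:ℂ) * Complex.I)‖ ≤ C * Real.exp (2 * Real.pi * n * b / T) := by
      intro x _
      simp only [hgdef]
      rw [norm_mul]
      have h1 : ‖Complex.exp (2 * (Real.pi:ℂ) * Complex.I * ((-n : ℤ) : ℂ) *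
            ((x:ℂ) + (b:ℂ) * Complex.I) / (T:ℂ))‖ = Real.exp (2 * Real.pi * n * b / T) := by
        rw [Complex.norm_exp]
        congr 1
        rw [show (2 * (Real.pi:ℂ) * Complex.I * ((-n : ℤ) : ℂ) *
              ((x:ℂ) + (b:ℂ) * Complex.I) / (T:ℂ))
            = Complex.ofReal (2 * Real.pi * n * b / T)
              + Complex.ofReal (-(2 * Real.pi * n * x / T)) * Complex.I from by
          push_cast
          field_simp
          linear_combination (-(n:ℂ) * (b:ℂ)) * Complex.I_sq]
        simp
      have h2 : ‖v ((x:ℂ) + (b:ℂ) * Complex.I)‖ ≤ C := by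
        apply hC
        simpa using hb
      rw [h1]
      exact le_trans (mul_le_mul_of_nonneg_left h2 (Real.exp_nonneg _))
        (le_of_eq (mul_comm _ _))
    calc ‖∫ x in (0:ℝ)..T, g n ((x:ℂ) + (b:ℂ) * Complex.I)‖
        ≤ C * Real.exp (2 * Real.pi * n * b / T) * |T - 0| :=
          intervalIntegral.norm_integral_le_of_norm_le_const hb1
      _ = C * Real.exp (2 * Real.pi * n * b / T) * T := by rw [sub_zero, abs_of_pos hT]
  -- Step C : decay of Fourier coefficients
  have hdecay : ∀ n : ℤ, ‖c n‖ ≤ C * Real.exp (-(2 * Real.pi * a / T * n.natAbs)) := by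
    intro n
    have hcast : (n.natAbs : ℝ) = |(n : ℝ)| := by
      rw [Nat.cast_natAbs, Int.cast_abs]
    have step : ∀ b₀ : ℝ, 0 ≤ b₀ → b₀ < a →
        ‖c n‖ ≤ C * Real.exp (-(2 * Real.pi * b₀ / T * n.natAbs)) := by
      intro b₀ hb₀0 hb₀a
      set b : ℝ := if 0 ≤ n then -b₀ else b₀ with hbdef
      have hba : |b| < a := by
        have habs0 : |b| = b₀ := by
          rw [hbdef]
          split
          · rw [abs_neg, _root_.abs_of_nonneg hb₀0]
          · rw [_root_.abs_of_nonneg hb₀0]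
        rw [habs0]
        exact hb₀a
      have hexpeq : 2 * Real.pi * n * b / T = -(2 * Real.pi * b₀ / T * n.natAbs) := by
        rw [hbdef]
        by_cases hn : 0 ≤ n
        · rw [if_pos hn, hcast, _root_.abs_of_nonneg (by exact_mod_cast hn : (0:ℝ) ≤ n)]
          ring
        · rw [if_neg hn, hcast, _root_.abs_of_neg (by exact_mod_cast not_le.mp hn : (n:ℝ) < 0)]
          ring
      rw [hcoefint n, norm_smul]
      calc ‖(1/T : ℝ)‖ * ‖∫ x in (0:ℝ)..T, g n x‖
          ≤ (1/T) * (C * Real.exp (2 * Real.pi * n * b / T) * T) := by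
            rw [Real.norm_eq_abs, abs_of_pos (by positivity)]
            exact mul_le_mul_of_nonneg_left (hbound n b hba) (by positivity)
        _ = C * Real.exp (-(2 * Real.pi * b₀ / T * n.natAbs)) := by
            rw [hexpeq]; field_simp
    have hcont : Continuous fun b₀ : ℝ => C * Real.exp (-(2 * Real.pi * b₀ / T * n.natAbs)) := by
      fun_prop
    refine ge_of_tendsto (b := ‖c n‖)
      ((hcont.tendsto a).mono_left (nhdsWithin_le_nhds (s := Set.Iio a))) ?_
    filter_upwards [Ioo_mem_nhdsLT_of_mem (Set.mem_Ioc.mpr ⟨ha, le_refl a⟩)] with b₀ hb₀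
    exact step b₀ hb₀.1.le hb₀.2
  -- summability of the coefficients
  set d : ℝ := 2 * Real.pi * a / T with hddef
  have hd0 : 0 < d := by positivity
  have hexp_pow : ∀ (e : ℝ) (k : ℕ), Real.exp (-(e * k)) = Real.exp (-e) ^ k := by
    intro e k
    rw [← Real.exp_nat_mul]
    congr 1
    ring
  have hgeomsum : ∀ A : ℝ, Summable fun k : ℕ => A * Real.exp (-d) ^ k := fun A =>
    (summable_geometric_of_lt_one (Real.exp_nonneg _)
      (Real.exp_lt_one_iff.mpr (by linarith))).mul_left A
  have hsummable : Summable c := by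
    apply Summable.of_norm_bounded (g := fun n : ℤ => C * Real.exp (-(d * n.natAbs))) ?_ hdecay
    apply Summable.of_nat_of_neg_add_one
    · have he : (fun k : ℕ => C * Real.exp (-(d * ((k:ℤ).natAbs : ℝ))))
          = fun k : ℕ => C * Real.exp (-d) ^ k := by
        funext k
        rw [Int.natAbs_natCast, hexp_pow]
      rw [he]
      exact hgeomsum C
    · have he : (fun k : ℕ => C * Real.exp (-(d * (((-((k:ℤ)+1)) : ℤ).natAbs : ℝ))))
          = fun k : ℕ => (C * Real.exp (-d)) * Real.exp (-d) ^ k := by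
        funext k
        have h1 : ((-((k:ℤ)+1)) : ℤ).natAbs = k + 1 := by omega
        rw [h1]
        push_cast
        rw [show -(d * ((k:ℝ)+1)) = -(d * k) + -d from by ring, Real.exp_add, hexp_pow]
        ring
      rw [he]
      exact hgeomsum _
  -- pointwise Fourier inversion at the grid points, summed over the grid
  have hpoint : ∀ i ∈ Finset.range M,
      HasSum (fun n : ℤ => c n • fourier n ((((T * ((i:ℝ)+1)/M) : ℝ)) : AddCircle T))
        (F ((((T * ((i:ℝ)+1)/M) : ℝ)) : AddCircle T)) :=
    fun i _ => has_pointwise_sum_fourier_series_of_summable hsummable _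
  have hsumgrid := (hasSum_sum hpoint).mul_left ((T:ℂ)/M)
  have hGn : ∀ n : ℤ,
      ((T:ℂ)/M) * ∑ i ∈ Finset.range M, c n • fourier n ((((T * ((i:ℝ)+1)/M) : ℝ)) : AddCircle T)
      = if (M:ℤ) ∣ n then (T:ℂ) * c n else 0 := by
    intro n
    simp only [smul_eq_mul]
    rw [← Finset.mul_sum]
    have hfou : ∀ i : ℕ, (fourier n ((((T * ((i:ℝ)+1)/M) : ℝ)) : AddCircle T) : ℂ)
        = Complex.exp (2 * (Real.pi:ℂ) * Complex.I * n / M) ^ (i+1) := by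
      intro i
      rw [fourier_coe_apply, ← Complex.exp_nat_mul]
      congr 1
      push_cast
      field_simp
    simp only [hfou]
    set ζ : ℂ := Complex.exp (2 * (Real.pi:ℂ) * Complex.I * n / M) with hζdef
    have hζM : ζ ^ M = 1 := by
      rw [hζdef, ← Complex.exp_nat_mul,
        show (M:ℂ) * (2 * (Real.pi:ℂ) * Complex.I * n / M) = (n:ℂ) * (2 * (Real.pi:ℂ) * Complex.I)
          from by field_simp]
      exact Complex.exp_int_mul_two_pi_mul_I n
    by_cases hdvd : (M:ℤ) ∣ n
    · obtain ⟨k, hk⟩ := hdvd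
      have hζ1 : ζ = 1 := by
        rw [hζdef, hk,
          show 2 * (Real.pi:ℂ) * Complex.I * (((M:ℤ) * k : ℤ) : ℂ) / M
              = (k:ℂ) * (2 * (Real.pi:ℂ) * Complex.I) from by push_cast; field_simp]
        exact Complex.exp_int_mul_two_pi_mul_I k
      rw [if_pos ⟨k, hk⟩]
      simp only [hζ1, one_pow]
      rw [Finset.sum_const, Finset.card_range]
      field_simp
      ring
    · rw [if_neg hdvd]
      have hζ1 : ζ ≠ 1 := by
        intro h
        obtain ⟨k, hk⟩ := Complex.exp_eq_one_iff.mp (hζdef ▸ h)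
        apply hdvd
        refine ⟨k, ?_⟩
        have hne : (2 * (Real.pi:ℂ) * Complex.I) ≠ 0 := by
          simp [Complex.I_ne_zero, Real.pi_ne_zero]
        have h2 : (2 * (Real.pi:ℂ) * Complex.I) * (n:ℂ)
            = (2 * (Real.pi:ℂ) * Complex.I) * ((M:ℂ) * k) := by
          field_simp at hk
          linear_combination (2 * (Real.pi:ℂ) * Complex.I) * hk
        have h3 := mul_left_cancel₀ hne h2
        exact_mod_cast h3
      have hsummul : ∑ i ∈ Finset.range M, ζ ^ (i+1) = (∑ i ∈ Finset.range M, ζ ^ i) * ζ := by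
        rw [Finset.sum_mul]
        exact Finset.sum_congr rfl fun i _ => pow_succ ζ i
      rw [hsummul, geom_sum_eq hζ1, hζM]
      simp
  have hG : HasSum (fun n : ℤ => if (M:ℤ) ∣ n then (T:ℂ) * c n else 0)
      (((T:ℂ)/M) * ∑ i ∈ Finset.range M, F ((((T * ((i:ℝ)+1)/M) : ℝ)) : AddCircle T)) := by
    have h := hsumgrid
    simp only [hGn] at h
    exact h
  have hMZ0 : (M:ℤ) ≠ 0 := by exact_mod_cast (by omega : M ≠ 0)
  have hinj : Function.Injective (fun m : ℤ => (M:ℤ) * m) := fun p q h => by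
    exact mul_left_cancel₀ hMZ0 h
  have hkey : HasSum (fun m : ℤ => (T:ℂ) * c ((M:ℤ) * m))
      (((T:ℂ)/M) * ∑ i ∈ Finset.range M, F ((((T * ((i:ℝ)+1)/M) : ℝ)) : AddCircle T)) := by
    have h0 : ∀ x ∉ Set.range (fun m : ℤ => (M:ℤ) * m),
        (if (M:ℤ) ∣ x then (T:ℂ) * c x else 0) = 0 := by
      intro x hx
      rw [if_neg]
      rintro ⟨k, hk⟩
      exact hx ⟨k, hk.symm⟩
    have h := (hinj.hasSum_iff h0).mpr hG
    simp only [Function.comp_def] at h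
    simpa [if_pos (dvd_mul_right ((M:ℤ)) _)] using h
  set S : ℂ := ((T:ℂ)/M) * ∑ i ∈ Finset.range M, F ((((T * ((i:ℝ)+1)/M) : ℝ)) : AddCircle T)
    with hSdef
  have hsub : HasSum
      (fun m : ℤ => (T:ℂ) * c ((M:ℤ) * m) - if m = 0 then (T:ℂ) * c ((M:ℤ) * 0) else 0)
      (S - (T:ℂ) * c ((M:ℤ) * 0)) := hkey.sub (hasSum_ite_eq 0 _)
  -- the geometric majorant
  set x₀ : ℝ := 2 * Real.pi * a * M / T with hx₀def
  have hx₀0 : 0 < x₀ := by positivity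
  set r : ℝ := Real.exp (-x₀) with hrdef
  have hr0 : (0:ℝ) ≤ r := Real.exp_nonneg _
  have hr1 : r < 1 := Real.exp_lt_one_iff.mpr (by linarith)
  have hnormb : ∀ m : ℤ,
      ‖(T:ℂ) * c ((M:ℤ) * m) - if m = 0 then (T:ℂ) * c ((M:ℤ) * 0) else 0‖
      ≤ (if m = 0 then (0:ℝ) else T * C * r ^ m.natAbs) := by
    intro m
    by_cases hm : m = 0
    · simp [hm]
    · rw [if_neg hm, if_neg hm, sub_zero, norm_mul]
      have h1 : ‖(T:ℂ)‖ = T := by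
        rw [Complex.norm_real, Real.norm_eq_abs, abs_of_pos hT]
      have h3 : Real.exp (-(d * ((((M:ℤ) * m).natAbs : ℕ) : ℝ))) = r ^ m.natAbs := by
        rw [Int.natAbs_mul, Int.natAbs_natCast]
        push_cast
        rw [show -(d * ((M:ℝ) * (m.natAbs:ℝ))) = -(x₀ * (m.natAbs:ℝ)) from by
          rw [hddef, hx₀def]; ring, hexp_pow, hrdef]
      have h2 := hdecay ((M:ℤ) * m)
      rw [h3] at h2
      calc ‖(T:ℂ)‖ * ‖c ((M:ℤ) * m)‖ ≤ T * (C * r ^ m.natAbs) := by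
            rw [h1]
            exact mul_le_mul_of_nonneg_left h2 hT.le
        _ = T * C * r ^ m.natAbs := by ring
  have h1r : (1:ℝ) - r ≠ 0 := by linarith
  have hBnat : HasSum (fun k : ℕ => if ((k:ℤ) : ℤ) = 0 then (0:ℝ) else T * C * r ^ ((k:ℤ)).natAbs)
      (T * C * (r / (1 - r))) := by
    have hg : HasSum (fun k : ℕ => T * C * r ^ k) (T * C * (1 - r)⁻¹) :=
      (hasSum_geometric_of_lt_one hr0 hr1).mul_left _
    have hi : HasSum (fun k : ℕ => if k = 0 then T * C else 0) (T * C) := hasSum_ite_eq 0 _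
    have h := hg.sub hi
    have hfe : (fun k : ℕ => T * C * r ^ k - if k = 0 then T * C else 0)
        = fun k : ℕ => if ((k:ℤ) : ℤ) = 0 then (0:ℝ) else T * C * r ^ ((k:ℤ)).natAbs := by
      funext k
      by_cases hk : k = 0 <;> simp [hk, Int.natAbs_natCast]
    have hve : T * C * (1 - r)⁻¹ - T * C = T * C * (r / (1 - r)) := by
      field_simp
      ring
    rw [hfe, hve] at h
    exact h
  have hBneg : HasSum (fun k : ℕ => if ((-((k:ℤ)+1)) : ℤ) = 0 then (0:ℝ)
        else T * C * r ^ ((-((k:ℤ)+1)) : ℤ).natAbs)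
      (T * C * (r / (1 - r))) := by
    have hg : HasSum (fun k : ℕ => (T * C * r) * r ^ k) ((T * C * r) * (1 - r)⁻¹) :=
      (hasSum_geometric_of_lt_one hr0 hr1).mul_left _
    have hfe : (fun k : ℕ => (T * C * r) * r ^ k)
        = fun k : ℕ => if ((-((k:ℤ)+1)) : ℤ) = 0 then (0:ℝ)
            else T * C * r ^ ((-((k:ℤ)+1)) : ℤ).natAbs := by
      funext k
      have h1 : ((-((k:ℤ)+1)) : ℤ).natAbs = k + 1 := by omega
      have h2 : ((-((k:ℤ)+1)) : ℤ) ≠ 0 := by omega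
      rw [if_neg h2, h1, pow_succ]
      ring
    have hve : (T * C * r) * (1 - r)⁻¹ = T * C * (r / (1 - r)) := by
      rw [div_eq_mul_inv]
      ring
    rw [hfe, hve] at hg
    exact hg
  have hB : HasSum (fun m : ℤ => if m = 0 then (0:ℝ) else T * C * r ^ m.natAbs)
      (T * C * (r / (1 - r)) + T * C * (r / (1 - r))) :=
    HasSum.of_nat_of_neg_add_one hBnat hBneg
  have hrval : T * C * (r / (1 - r)) + T * C * (r / (1 - r)) = 2 * T * C / (Real.exp x₀ - 1) := by
    have hgt1 : (1:ℝ) < Real.exp x₀ := by nlinarith [Real.add_one_le_exp x₀]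
    have he0 : Real.exp x₀ - 1 ≠ 0 := by linarith
    have hex0 : Real.exp x₀ ≠ 0 := (Real.exp_pos _).ne'
    rw [hrdef, Real.exp_neg]
    field_simp
    ring
  have hsummn : Summable (fun m : ℤ =>
      ‖(T:ℂ) * c ((M:ℤ) * m) - if m = 0 then (T:ℂ) * c ((M:ℤ) * 0) else 0‖) :=
    Summable.of_nonneg_of_le (fun m => norm_nonneg _) hnormb hB.summable
  have hfin : ‖S - (T:ℂ) * c ((M:ℤ) * 0)‖ ≤ 2 * T * C / (Real.exp x₀ - 1) := by
    rw [← hsub.tsum_eq]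
    calc ‖∑' m : ℤ, ((T:ℂ) * c ((M:ℤ) * m) - if m = 0 then (T:ℂ) * c ((M:ℤ) * 0) else 0)‖
        ≤ ∑' m : ℤ, ‖(T:ℂ) * c ((M:ℤ) * m) - if m = 0 then (T:ℂ) * c ((M:ℤ) * 0) else 0‖ :=
          norm_tsum_le_tsum_norm hsummn
      _ ≤ ∑' m : ℤ, (if m = 0 then (0:ℝ) else T * C * r ^ m.natAbs) :=
          Summable.tsum_le_tsum hnormb hsummn hB.summable
      _ = T * C * (r / (1 - r)) + T * C * (r / (1 - r)) := hB.tsum_eq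
      _ = 2 * T * C / (Real.exp x₀ - 1) := hrval
  -- identify the two sides
  have hS : ((T / M : ℝ) : ℂ) * (∑ i ∈ Finset.range M, v ((T * ((i : ℝ) + 1) / M : ℝ))) = S := by
    rw [hSdef, show ((T / M : ℝ) : ℂ) = (T:ℂ)/(M:ℂ) from by push_cast; ring]
    congr 1
  have hint : (∫ k in (0:ℝ)..T, v (k:ℂ)) = (T:ℂ) * c ((M:ℤ) * 0) := by
    have h0 : c 0 = (1/T : ℝ) • ∫ x in (0:ℝ)..T, v (x:ℂ) := by
      rw [hcdef, fourierCoeff_eq_intervalIntegral (⇑F) 0 0, zero_add]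
      congr 1
      apply intervalIntegral.integral_congr
      intro x _
      show fourier (-0) ((x:ℝ) : AddCircle T) • F ((x:ℝ) : AddCircle T) = v (x:ℂ)
      rw [neg_zero, fourier_zero, one_smul, hFcoe]
    rw [mul_zero, h0, Complex.real_smul]
    push_cast
    rw [← mul_assoc]
    rw [show (T:ℂ) * (1/(T:ℂ)) = 1 from by field_simp, one_mul]
  rw [hS, hint]
  exact hfin
end
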